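/- Let n, m ≥ 1, let π ∈ J_{2n,2m}, set γ = γ_{2n,2m} and I = I_{2n+2m}. Then a subset O ⊆ {1,…,2n+2m} consisting entirely of odd numbers is a cycle (orbit) of I∘π if and only if it is a cycle of γ⁻¹∘π; moreover, the permutations I∘π and γ⁻¹∘π agree pointwise on every such subset O. -/

import Mathlib

noncomputable def cycleCount {N : ℕ} (π : Equiv.Perm (Fin N)) : ℕ :=
  Set.ncard {O : Set (Fin N) | ∃ x, O = {y | π.SameCycle x y}}

noncomputable def cyclesIn {N : ℕ} (π : Equiv.Perm (Fin N)) (C : Set (Fin N)) : ℕ :=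
  Set.ncard {O : Set (Fin N) | (∃ x, O = {y | π.SameCycle x y}) ∧ O ⊆ C}

/-- The annular permutation `γ_{p,q}` of `{1,…,p+q}` (0-indexed as `Fin (p+q)`),
with the two cycles `(1,…,p)` and `(p+1,…,p+q)`. -/
def annularGamma (p q : ℕ) : Equiv.Perm (Fin (p + q)) :=
  finSumFinEquiv.permCongr ((finRotate p).sumCongr (finRotate q))

/-- The interval involution `I_N = (1 2)(3 4)⋯(N-1 N)` of `{1,…,N}`
(0-indexed: swaps `2i ↔ 2i+1`), for `N` even. -/
def intervalInvolution (N : ℕ) : Equiv.Perm (Fin N) :=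
  Function.Involutive.toPerm
    (fun x => ⟨if x.val % 2 = 0 then min (x.val + 1) (N - 1) else x.val - 1, by
      rcases x with ⟨v, hv⟩
      dsimp only
      split <;> omega⟩)
    (by
      intro x
      rcases x with ⟨v, hv⟩
      apply Fin.ext
      dsimp only
      split_ifs <;> omega)

/-- The subgroup generated by `π` and `ρ` acts transitively on `Fin N`. -/
def JointTrans {N : ℕ} (π ρ : Equiv.Perm (Fin N)) : Prop :=
  ∀ x y : Fin N, ∃ g ∈ Subgroup.closure ({π, ρ} : Set (Equiv.Perm (Fin N))), g x = y

/-- `α` separates even numbers: no cycle of `α` contains two distinct even numbers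
(an element `x : Fin N` represents the number `x.val + 1`). -/
def SeparatesEven {N : ℕ} (α : Equiv.Perm (Fin N)) : Prop :=
  ∀ x y : Fin N, α.SameCycle x y → (x.val + 1) % 2 = 0 → (y.val + 1) % 2 = 0 → x = y

/-- `π ∈ S_NC(p,q)`: annular non-crossing permutations. -/
def AnnularNC (p q : ℕ) (π : Equiv.Perm (Fin (p + q))) : Prop :=
  JointTrans π (annularGamma p q) ∧
    cycleCount π + cycleCount (π⁻¹ * annularGamma p q) = p + q

/-- `A` witnesses bipartiteness of the graph `G_π`: `π(A) = A` and for each `i`,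
exactly one of the (1-indexed) numbers `2i-1`, `2i` belongs to `A`. -/
def BipartSet {N : ℕ} (π : Equiv.Perm (Fin N)) (A : Set (Fin N)) : Prop :=
  (⇑π) '' A = A ∧ ∀ i : ℕ, ∀ h : 2 * i + 1 < N,
    Xor' ((⟨2 * i, Nat.lt_of_succ_lt h⟩ : Fin N) ∈ A) ((⟨2 * i + 1, h⟩ : Fin N) ∈ A)

/-- The graph `G_π` is bipartite. -/
def GraphBipartite {N : ℕ} (π : Equiv.Perm (Fin N)) : Prop :=
  ∃ A : Set (Fin N), BipartSet π A

/-- `π ∈ J_{2n,2m}`: annular non-crossing, bipartite graph, and `π⁻¹γ` separates even. -/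
def memJ (n m : ℕ) (π : Equiv.Perm (Fin (2 * n + 2 * m))) : Prop :=
  AnnularNC (2 * n) (2 * m) π ∧ GraphBipartite π ∧
    SeparatesEven (π⁻¹ * annularGamma (2 * n) (2 * m))


lemma finRotate_val (p : ℕ) (i : Fin p) (h : i.val + 1 < p) :
    (finRotate p i).val = i.val + 1 := by
  cases p with
  | zero => exact absurd i.isLt (by omega)
  | succ k =>
      rw [coe_finRotate_of_ne_last]
      intro hne
      have := congrArg Fin.val hne
      simp [Fin.val_last] at this
      omega

lemma gamma_even {n m : ℕ} (hn : 1 ≤ n) (hm : 1 ≤ m) (w : Fin (2*n + 2*m))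
    (hw : w.val % 2 = 0) : ((annularGamma (2*n) (2*m)) w).val = w.val + 1 := by
  rcases w with ⟨v, hv⟩
  have hw' : v % 2 = 0 := hw
  rw [annularGamma, Equiv.permCongr_apply]
  by_cases h : v < 2*n
  · have h1 : (⟨v, hv⟩ : Fin (2*n+2*m)) = Fin.castAdd (2*m) ⟨v, h⟩ := rfl
    rw [h1, finSumFinEquiv_symm_apply_castAdd]
    simp only [Equiv.sumCongr_apply, Sum.map_inl, finSumFinEquiv_apply_left, Fin.coe_castAdd]
    exact finRotate_val _ _ (by simp only [Fin.val_mk]; omega)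
  · have h1 : (⟨v, hv⟩ : Fin (2*n+2*m)) = Fin.natAdd (2*n) ⟨v - 2*n, by omega⟩ := by
      apply Fin.ext; simp; omega
    rw [h1, finSumFinEquiv_symm_apply_natAdd]
    simp only [Equiv.sumCongr_apply, Sum.map_inr, finSumFinEquiv_apply_right, Fin.coe_natAdd]
    rw [finRotate_val _ _ (by simp only [Fin.val_mk]; omega)]
    simp; omega

lemma gammaInv_odd {n m : ℕ} (hn : 1 ≤ n) (hm : 1 ≤ m) (z : Fin (2*n + 2*m))
    (hz : z.val % 2 = 1) : ((annularGamma (2*n) (2*m))⁻¹ z).val = z.val - 1 := by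
  have hzv : 1 ≤ z.val := by omega
  have hzN : z.val - 1 < 2*n + 2*m := by omega
  have hgw : (annularGamma (2*n) (2*m)) ⟨z.val - 1, hzN⟩ = z := by
    apply Fin.ext
    rw [gamma_even hn hm _ (by simp only [Fin.val_mk]; omega)]
    simp only [Fin.val_mk]; omega
  have h2 : (annularGamma (2*n) (2*m))⁻¹ z = ⟨z.val - 1, hzN⟩ := by
    rw [Equiv.Perm.inv_eq_iff_eq]; exact hgw.symm
  rw [h2]

lemma gammaInv_even {n m : ℕ} (hn : 1 ≤ n) (hm : 1 ≤ m) (z : Fin (2*n + 2*m))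
    (hz : z.val % 2 = 0) : ((annularGamma (2*n) (2*m))⁻¹ z).val % 2 = 1 := by
  by_contra hc
  have hw : ((annularGamma (2*n) (2*m))⁻¹ z).val % 2 = 0 := by omega
  have := gamma_even hn hm _ hw
  rw [← Equiv.Perm.mul_apply, mul_inv_cancel, Equiv.Perm.one_apply] at this
  omega

lemma I_apply (N : ℕ) (z : Fin N) : ((intervalInvolution N) z).val
    = if z.val % 2 = 0 then min (z.val + 1) (N - 1) else z.val - 1 := rfl

lemma I_odd (N : ℕ) (z : Fin N) (hz : z.val % 2 = 1) :
    ((intervalInvolution N) z).val = z.val - 1 := by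
  rw [I_apply, if_neg (by omega)]

lemma I_even (N : ℕ) (hN : N % 2 = 0) (z : Fin N) (hz : z.val % 2 = 0) :
    ((intervalInvolution N) z).val = z.val + 1 := by
  have := z.isLt
  rw [I_apply]; simp [hz]; omega

lemma keyEq {n m : ℕ} (hn : 1 ≤ n) (hm : 1 ≤ m) (z : Fin (2*n + 2*m))
    (hz : z.val % 2 = 1) :
    (intervalInvolution (2*n + 2*m)) z = (annularGamma (2*n) (2*m))⁻¹ z := by
  apply Fin.ext
  rw [I_odd _ _ hz, gammaInv_odd hn hm _ hz]

theorem stmt_10 (n m : ℕ) (hn : 1 ≤ n) (hm : 1 ≤ m)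
    (π : Equiv.Perm (Fin (2 * n + 2 * m))) (hπ : memJ n m π)
    (O : Set (Fin (2 * n + 2 * m)))
    (hodd : ∀ y ∈ O, (y.val + 1) % 2 = 1) :
    ((∃ x, O = {y | (intervalInvolution (2 * n + 2 * m) * π).SameCycle x y}) ↔
      (∃ x, O = {y | ((annularGamma (2 * n) (2 * m))⁻¹ * π).SameCycle x y})) ∧
    ((∃ x, O = {y | (intervalInvolution (2 * n + 2 * m) * π).SameCycle x y}) →
      ∀ y ∈ O, (intervalInvolution (2 * n + 2 * m) * π) y
        = ((annularGamma (2 * n) (2 * m))⁻¹ * π) y) := by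
  set f := intervalInvolution (2 * n + 2 * m) * π with hf
  set g := (annularGamma (2 * n) (2 * m))⁻¹ * π with hg
  have hN : (2 * n + 2 * m) % 2 = 0 := by omega
  -- key pointwise lemmas
  have hkeyI : ∀ y : Fin (2 * n + 2 * m), (f y).val % 2 = 0 → f y = g y := by
    intro y hy
    rw [hf, hg, Equiv.Perm.mul_apply] at *
    rcases Nat.mod_two_eq_zero_or_one (π y).val with h0 | h1
    · rw [I_even _ hN _ h0] at hy; omega
    · exact keyEq hn hm _ h1
  have hkeyG : ∀ y : Fin (2 * n + 2 * m), (g y).val % 2 = 0 → f y = g y := by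
    intro y hy
    rw [hf, hg, Equiv.Perm.mul_apply] at *
    rcases Nat.mod_two_eq_zero_or_one (π y).val with h0 | h1
    · have := gammaInv_even hn hm _ h0; omega
    · exact keyEq hn hm _ h1
  have hoddv : ∀ y ∈ O, y.val % 2 = 0 := by
    intro y hy; have := hodd y hy; omega
  have claimF : ∀ x : Fin (2 * n + 2 * m),
      O = {y | f.SameCycle x y} → ∀ k : ℕ, (f ^ k) x ∈ O ∧ (f ^ k) x = (g ^ k) x := by
    intro x hO k
    induction k with
    | zero => simpa [hO] using Equiv.Perm.SameCycle.refl f x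
    | succ k ih =>
        obtain ⟨hmem, heq⟩ := ih
        have hscy : f.SameCycle x ((f ^ k) x) := by rw [hO] at hmem; exact hmem
        have hmem' : (f ^ (k + 1)) x ∈ O := by
          rw [pow_succ', Equiv.Perm.mul_apply, hO]
          exact Equiv.Perm.sameCycle_apply_right.mpr hscy
        refine ⟨hmem', ?_⟩
        have heq1 : (f ^ (k + 1)) x = f ((f ^ k) x) := by
          rw [pow_succ', Equiv.Perm.mul_apply]
        have hpar : (f ((f ^ k) x)).val % 2 = 0 := by
          apply hoddv
          rw [← heq1]; exact hmem'
        rw [heq1, hkeyI _ hpar, heq, pow_succ']; rfl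
  have claimG : ∀ x : Fin (2 * n + 2 * m),
      O = {y | g.SameCycle x y} → ∀ k : ℕ, (g ^ k) x ∈ O ∧ (f ^ k) x = (g ^ k) x := by
    intro x hO k
    induction k with
    | zero => simpa [hO] using Equiv.Perm.SameCycle.refl g x
    | succ k ih =>
        obtain ⟨hmem, heq⟩ := ih
        have hscy : g.SameCycle x ((g ^ k) x) := by rw [hO] at hmem; exact hmem
        have hmem' : (g ^ (k + 1)) x ∈ O := by
          rw [pow_succ', Equiv.Perm.mul_apply]
          rw [hO]
          exact Equiv.Perm.sameCycle_apply_right.mpr hscy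
        refine ⟨hmem', ?_⟩
        have heq1 : (g ^ (k + 1)) x = g ((g ^ k) x) := by
          rw [pow_succ', Equiv.Perm.mul_apply]
        have hpar : (g ((g ^ k) x)).val % 2 = 0 := by
          apply hoddv
          rw [← heq1]; exact hmem'
        rw [heq1, ← hkeyG _ hpar, ← heq, pow_succ']; rfl
  constructor
  · constructor
    · rintro ⟨x, hO⟩
      refine ⟨x, ?_⟩
      ext y
      rw [hO]
      simp only [Set.mem_setOf_eq]
      constructor
      · intro hy
        obtain ⟨i, -, hi⟩ := hy.exists_pow_eq'
        exact ⟨(i : ℤ), by rw [zpow_natCast, ← (claimF x hO i).2, hi]⟩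
      · intro hy
        obtain ⟨i, -, hi⟩ := hy.exists_pow_eq'
        exact ⟨(i : ℤ), by rw [zpow_natCast, (claimF x hO i).2, hi]⟩
    · rintro ⟨x, hO⟩
      refine ⟨x, ?_⟩
      ext y
      rw [hO]
      simp only [Set.mem_setOf_eq]
      constructor
      · intro hy
        obtain ⟨i, -, hi⟩ := hy.exists_pow_eq'
        exact ⟨(i : ℤ), by rw [zpow_natCast, (claimG x hO i).2, hi]⟩
      · intro hy
        obtain ⟨i, -, hi⟩ := hy.exists_pow_eq'
        exact ⟨(i : ℤ), by rw [zpow_natCast, ← (claimG x hO i).2, hi]⟩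
  · rintro ⟨x, hO⟩ y hy
    have hscy : f.SameCycle x y := by rw [hO] at hy; exact hy
    have hfy : f y ∈ O := by
      rw [hO]; exact Equiv.Perm.sameCycle_apply_right.mpr hscy
    exact hkeyI y (hoddv _ hfy)
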